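/- arXiv:1401.2186 — 2 statements merged into one kernel-verified Lean document; each statement's English description precedes it below -/
import Mathlib

section
/- Let (μ, (f_i)_{i∈Z_N}) be a monic system on K_N, and let S_i f = f_i·(f∘σ) be the associated operators on L²(μ). Define g_i(x) = f_i(x)/|f_i(x)|² when f_i(x) ≠ 0 and g_i(x) = 0 otherwise. Then the adjoint of S_i is given by S_i* f = (conj(g_i)∘σ_i)·(f∘σ_i). -/
open MeasureTheory ENNReal
open scoped NNReal

noncomputable section

abbrev Word (N : ℕ) := ℕ → Fin N

/-- The left shift `σ` deleting the first letter. -/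
def shift {N : ℕ} (ω : Word N) : Word N := fun n => ω (n + 1)

/-- The map `σ_i` prepending the letter `i`. -/
def prepend {N : ℕ} (i : Fin N) (ω : Word N) : Word N :=
  fun n => match n with
  | 0 => i
  | n + 1 => ω n

/-- The cylinder set determined by a finite word. -/
def cyl {N : ℕ} (w : List (Fin N)) : Set (Word N) :=
  {ω | ∀ k : Fin w.length, ω k = w.get k}

lemma measurable_shift {N : ℕ} : Measurable (shift (N := N)) :=
  measurable_pi_lambda _ fun n => measurable_pi_apply (n + 1)

lemma measurable_prepend {N : ℕ} (i : Fin N) : Measurable (prepend i) :=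
  measurable_pi_lambda _ fun n => by
    cases n with
    | zero => exact measurable_const
    | succ n => exact measurable_pi_apply n

lemma shift_prepend {N : ℕ} (i : Fin N) (x : Word N) : shift (prepend i x) = x :=
  funext fun n => rfl

theorem monicSystem_adjoint_formula {N : ℕ} (hN : 2 ≤ N)
    (μ : Measure (Word N)) [IsFiniteMeasure μ] (f : Fin N → Word N → ℂ)
    (hf2 : ∀ i, MemLp (f i) 2 μ)
    (hac : ∀ i, μ.map (prepend i) ≪ μ)
    (hrn : ∀ i, (μ.map (prepend i)).rnDeriv μ =ᵐ[μ]
      fun x => ENNReal.ofReal (‖f i x‖ ^ 2))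
    (hne : ∀ i, ∀ᵐ x ∂μ, x 0 = i → f i x ≠ 0)
    (S : Fin N → (Lp ℂ 2 μ →L[ℂ] Lp ℂ 2 μ))
    (hS : ∀ i (g : Lp ℂ 2 μ), ⇑(S i g) =ᵐ[μ] fun x => f i x * g (shift x))
    (g' : Fin N → Word N → ℂ)
    (hg' : ∀ i x, g' i x = if f i x ≠ 0 then f i x / (‖f i x‖ : ℂ) ^ 2 else 0) :
    ∀ i (g : Lp ℂ 2 μ),
      ⇑(ContinuousLinearMap.adjoint (S i) g) =ᵐ[μ]
        fun x => (starRingEnd ℂ) (g' i (prepend i x)) * g (prepend i x) := by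
  intro i g
  classical
  -- a measurable representative of `f i`
  set F : Word N → ℂ := (hf2 i).1.mk (f i) with hFdef
  have hFm : Measurable F := (hf2 i).1.stronglyMeasurable_mk.measurable
  have hFae : f i =ᵐ[μ] F := (hf2 i).1.ae_eq_mk
  -- the density of `μ.map (prepend i)`
  set d : Word N → ℝ≥0 := fun x => ‖F x‖₊ ^ 2 with hddef
  have hdm : Measurable d := hFm.nnnorm.pow_const 2
  set ν : Measure (Word N) := μ.map (prepend i) with hνdef
  have hmap : ν = μ.withDensity fun x => (d x : ℝ≥0∞) := by
    haveI : (μ.map (prepend i)).HaveLebesgueDecomposition μ :=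
      Measure.haveLebesgueDecomposition_of_sigmaFinite _ _
    rw [hνdef, ← Measure.withDensity_rnDeriv_eq (μ.map (prepend i)) μ (hac i)]
    refine withDensity_congr_ae ?_
    filter_upwards [hrn i, hFae] with x h1 h2
    rw [h1, h2]
    rw [ENNReal.ofReal_pow (norm_nonneg _), ofReal_norm, enorm_eq_nnnorm, ← ENNReal.coe_pow]
  -- measurability facts
  have hprep : AEMeasurable (prepend i) μ := (measurable_prepend i).aemeasurable
  have houter : Measurable fun z : ℂ => if z ≠ 0 then z / (‖z‖ : ℂ) ^ 2 else 0 := by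
    refine Measurable.ite ?_ ?_ measurable_const
    · exact (measurableSet_singleton (0 : ℂ)).compl
    · exact measurable_id.div ((Complex.measurable_ofReal.comp measurable_norm).pow_const 2)
  have hg'eq : g' i = (fun z : ℂ => if z ≠ 0 then z / (‖z‖ : ℂ) ^ 2 else 0) ∘ f i := by
    funext x; simp [hg' i x, Function.comp]
  have hg'aem : AEMeasurable (g' i) μ := by
    rw [hg'eq]; exact houter.comp_aemeasurable (hf2 i).1.aemeasurable
  have hg'ν : AEMeasurable (g' i) ν := hg'aem.mono_ac (hac i)
  have hgν : AEMeasurable (⇑g) ν := (Lp.aestronglyMeasurable g).aemeasurable.mono_ac (hac i)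
  have hνshift : ν.map shift = μ := by
    rw [hνdef, Measure.map_map measurable_shift (measurable_prepend i)]
    have : shift ∘ prepend i = id := funext fun x => shift_prepend i x
    rw [this, Measure.map_id]
  -- pointwise bound : ‖g' i x‖ * ‖f i x‖ ≤ 1
  have hbound : ∀ x, ‖g' i x‖ * ‖f i x‖ ≤ 1 := by
    intro x
    rw [hg' i x]
    by_cases h : f i x = 0
    · simp [h]
    · have hn : ‖f i x‖ ≠ 0 := norm_ne_zero_iff.mpr h
      rw [if_pos h, norm_div]
      have : ‖((‖f i x‖ : ℂ)) ^ 2‖ = ‖f i x‖ ^ 2 := by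
        rw [norm_pow, Complex.norm_real, norm_norm]
      rw [this]
      have heq : ‖f i x‖ / ‖f i x‖ ^ 2 * ‖f i x‖ = 1 := by
        rw [div_mul_eq_mul_div, ← pow_two, div_self (pow_ne_zero 2 hn)]
      rw [heq]
  -- key identity : ‖f i x‖^2 * g' i x = f i x
  have hkey : ∀ x, (‖f i x‖ : ℂ) ^ 2 * g' i x = f i x := by
    intro x
    rw [hg' i x]
    by_cases h : f i x = 0
    · simp [h]
    · have hn : ((‖f i x‖ : ℂ)) ^ 2 ≠ 0 := by
        simp [pow_ne_zero_iff, Complex.ofReal_ne_zero, norm_ne_zero_iff, h]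
      rw [if_pos h, mul_div_cancel₀ _ hn]
  -- the candidate function
  set ψ : Word N → ℂ := fun x => (starRingEnd ℂ) (g' i x) * g x with hψdef
  set φ : Word N → ℂ := fun x => (starRingEnd ℂ) (g' i (prepend i x)) * g (prepend i x)
    with hφdef
  have hφψ : φ = ψ ∘ prepend i := rfl
  have hψν : AEMeasurable ψ ν := (Measurable.comp_aemeasurable (continuous_star.measurable : Measurable (star : ℂ → ℂ)) hg'ν).mul hgν
  have hφaem : AEMeasurable φ μ := by
    rw [hφψ]; exact hψν.comp_aemeasurable hprep
  -- φ is in L²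
  have hφ2 : MemLp φ 2 μ := by
    refine ⟨hφaem.aestronglyMeasurable, ?_⟩
    have h1 : eLpNorm φ 2 μ = eLpNorm ψ 2 ν := by
      rw [hφψ, hνdef]
      exact (eLpNorm_map_measure hψν.aestronglyMeasurable hprep).symm
    rw [h1]
    have h2 : eLpNorm ψ 2 ν ≤ eLpNorm (⇑g) 2 μ := by
      rw [eLpNorm_eq_lintegral_rpow_enorm_toReal (two_ne_zero) (ENNReal.ofNat_ne_top),
        eLpNorm_eq_lintegral_rpow_enorm_toReal (two_ne_zero) (ENNReal.ofNat_ne_top)]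
      refine ENNReal.rpow_le_rpow ?_ (by positivity)
      have hψν' : AEMeasurable ψ (μ.withDensity fun x => (d x : ℝ≥0∞)) := hmap ▸ hψν
      rw [hmap, lintegral_withDensity_eq_lintegral_mul₀' hdm.coe_nnreal_ennreal.aemeasurable
        (hψν'.enorm.pow_const _)]
      have : ∫⁻ x, ((d x : ℝ≥0∞) * (‖ψ x‖₊ : ℝ≥0∞) ^ ((2 : ℝ≥0∞).toReal)) ∂μ
          ≤ ∫⁻ x, (‖g x‖₊ : ℝ≥0∞) ^ ((2 : ℝ≥0∞).toReal) ∂μ := by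
        refine lintegral_mono_ae ?_
        filter_upwards [hFae] with x hx
        have hxb : ‖g' i x‖₊ * ‖F x‖₊ ≤ 1 := by
          rw [← hx]
          have := hbound x
          rw [← NNReal.coe_le_coe]
          simpa using this
        have e2 : ((2 : ℝ≥0∞).toReal) = ((2 : ℕ) : ℝ) := by norm_num
        rw [e2, ENNReal.rpow_natCast, ENNReal.rpow_natCast]
        have : (d x : ℝ≥0∞) * (‖ψ x‖₊ : ℝ≥0∞) ^ (2 : ℕ)
            = ((‖F x‖₊ * ‖ψ x‖₊) ^ (2 : ℕ) : ℝ≥0) := by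
          simp only [hddef]
          push_cast
          ring
        rw [this]
        have hψn : ‖ψ x‖₊ ≤ ‖g' i x‖₊ * ‖g x‖₊ := by
          rw [hψdef]
          calc ‖(starRingEnd ℂ) (g' i x) * g x‖₊
              ≤ ‖(starRingEnd ℂ) (g' i x)‖₊ * ‖g x‖₊ := nnnorm_mul_le _ _
            _ = ‖g' i x‖₊ * ‖g x‖₊ := by rw [RCLike.nnnorm_conj]
        have : ‖F x‖₊ * ‖ψ x‖₊ ≤ ‖g x‖₊ := by
          calc ‖F x‖₊ * ‖ψ x‖₊ ≤ ‖F x‖₊ * (‖g' i x‖₊ * ‖g x‖₊) :=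
                mul_le_mul_right hψn _
            _ = (‖g' i x‖₊ * ‖F x‖₊) * ‖g x‖₊ := by ring
            _ ≤ 1 * ‖g x‖₊ := mul_le_mul_left hxb _
            _ = ‖g x‖₊ := one_mul _
        exact_mod_cast pow_le_pow_left₀ (zero_le) (ENNReal.coe_le_coe.mpr this) 2
      simpa [enorm_eq_nnnorm] using this
    exact lt_of_le_of_lt h2 (Lp.eLpNorm_lt_top g)
  set φL : Lp ℂ 2 μ := hφ2.toLp φ with hφLdef
  have hφL : ⇑φL =ᵐ[μ] φ := hφ2.coeFn_toLp
  -- the inner-product identity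
  have key : ∀ h : Lp ℂ 2 μ,
      (inner ℂ φL h : ℂ) = inner ℂ g (S i h) := by
    intro h
    have hhν : AEMeasurable (fun x => h (shift x)) ν := by
      have : AEMeasurable (⇑h) (ν.map shift) := by
        rw [hνshift]; exact (Lp.aestronglyMeasurable h).aemeasurable
      exact this.comp_aemeasurable measurable_shift.aemeasurable
    set ψ' : Word N → ℂ := fun x => g' i x * (starRingEnd ℂ) (g x) * h (shift x) with hψ'def
    have hψ'ν : AEMeasurable ψ' ν := (hg'ν.mul (Measurable.comp_aemeasurable (continuous_star.measurable : Measurable (star : ℂ → ℂ)) hgν)).mul hhν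
    calc (inner ℂ φL h : ℂ) = ∫ x, (starRingEnd ℂ) (φL x) * h x ∂μ := by
          rw [L2.inner_def]; simp [RCLike.inner_apply, mul_comm]
      _ = ∫ x, (starRingEnd ℂ) (φ x) * h x ∂μ := by
          refine integral_congr_ae ?_
          filter_upwards [hφL] with x hx
          rw [hx]
      _ = ∫ x, ψ' (prepend i x) ∂μ := by
          refine integral_congr_ae (Filter.Eventually.of_forall fun x => ?_)
          rw [hφdef, hψ'def]
          simp only [shift_prepend, map_mul, RingHomCompTriple.comp_apply, RingHom.id_apply,
            Complex.conj_conj]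
      _ = ∫ x, ψ' x ∂ν := by
          rw [hνdef, integral_map hprep hψ'ν.aestronglyMeasurable]
      _ = ∫ x, d x • ψ' x ∂μ := by
          rw [hmap, integral_withDensity_eq_integral_smul hdm]
      _ = ∫ x, (starRingEnd ℂ) (g x) * (f i x * h (shift x)) ∂μ := by
          refine integral_congr_ae ?_
          filter_upwards [hFae] with x hx
          rw [hψ'def]
          have hdx : ((d x : ℝ) : ℂ) = (‖f i x‖ : ℂ) ^ 2 := by
            simp only [hddef, hx]
            push_cast
            ring
          have : d x • (g' i x * (starRingEnd ℂ) (g x) * h (shift x))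
              = ((d x : ℝ) : ℂ) * (g' i x * (starRingEnd ℂ) (g x) * h (shift x)) := by
            rw [NNReal.smul_def, Complex.real_smul]
          rw [this, hdx, show (‖f i x‖ : ℂ) ^ 2 * (g' i x * (starRingEnd ℂ) (g x) * h (shift x))
            = ((‖f i x‖ : ℂ) ^ 2 * g' i x) * ((starRingEnd ℂ) (g x) * h (shift x)) by ring,
            hkey x]
          ring
      _ = ∫ x, (starRingEnd ℂ) (g x) * (S i h) x ∂μ := by
          refine integral_congr_ae ?_
          filter_upwards [hS i h] with x hx
          rw [hx]
      _ = inner ℂ g (S i h) := by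
          rw [L2.inner_def]; simp [RCLike.inner_apply, mul_comm]
  -- conclude by uniqueness of the adjoint
  have hadj : ContinuousLinearMap.adjoint (S i) g = φL := by
    refine ext_inner_right ℂ fun h => ?_
    rw [ContinuousLinearMap.adjoint_inner_left, key h]
  rw [hadj]
  exact hφL
end
end

section
/- Let (μ, (f_i)) and (μ', (f_i')) be two nonnegative monic systems (all f_i, f_i' ≥ 0) on K_N. If μ and μ' are mutually absolutely continuous and h = √(dμ'/dμ), then f_i'·h = f_i·(h∘σ) holds μ-a.e. for every i ∈ Z_N; consequently the two associated representations of the Cuntz algebra are unitarily equivalent. -/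
open MeasureTheory ENNReal

noncomputable section

namespace MonicAux

lemma measurable_shift {N : ℕ} : Measurable (shift (N := N)) :=
  measurable_pi_lambda _ fun n => measurable_pi_apply (n + 1)

lemma measurable_prepend {N : ℕ} (i : Fin N) : Measurable (prepend i) := by
  apply measurable_pi_lambda
  intro n
  match n with
  | 0 => exact measurable_const
  | Nat.succ n => exact measurable_pi_apply n

lemma shift_prepend {N : ℕ} (i : Fin N) (ω : Word N) : shift (prepend i ω) = ω := rfl

lemma prepend_zero {N : ℕ} (i : Fin N) (ω : Word N) : prepend i ω 0 = i := rfl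

-- pointwise norm identity
lemma key_pt (a : ℝ) (ha : 0 ≤ a) (b : ℂ) :
    (‖(a : ℂ) * b‖₊ : ℝ≥0∞) ^ (2 : ℝ) = ENNReal.ofReal (a ^ 2) * (‖b‖₊ : ℝ≥0∞) ^ (2 : ℝ) := by
  have h2 : ((2 : ℝ)) = ((2 : ℕ) : ℝ) := by norm_num
  rw [h2, ENNReal.rpow_natCast, ENNReal.rpow_natCast, nnnorm_mul]
  push_cast
  rw [mul_pow]
  congr 1
  rw [ENNReal.ofReal_pow ha]
  congr 1
  rw [Complex.nnnorm_real]; exact Real.enorm_eq_ofReal ha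


section W
variable {α : Type*} [MeasurableSpace α] {μ μ' : Measure α} {h : α → ℝ}

lemma eLpNorm_mul_h (hh0 : ∀ x, 0 ≤ h x) (hhm : Measurable h)
    (hμ' : μ' = μ.withDensity fun x => ENNReal.ofReal (h x ^ 2))
    {g : α → ℂ} (hg : AEStronglyMeasurable g μ') :
    eLpNorm (fun x => (h x : ℂ) * g x) 2 μ = eLpNorm g 2 μ' := by
  have h2 : ((2 : ℝ≥0∞)).toReal = (2 : ℝ) := by simp
  rw [eLpNorm_eq_lintegral_rpow_enorm_toReal two_ne_zero ENNReal.ofNat_ne_top,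
    eLpNorm_eq_lintegral_rpow_enorm_toReal two_ne_zero ENNReal.ofNat_ne_top, h2]
  congr 1
  have hH : Measurable (fun x => ENNReal.ofReal (h x ^ 2)) :=
    ENNReal.measurable_ofReal.comp ((hhm.pow_const 2))
  have hgm : AEMeasurable (fun x => ‖g x‖ₑ ^ (2 : ℝ)) μ' :=
    (hg.aemeasurable.enorm.pow_const _)
  rw [hμ'] at hgm ⊢
  rw [lintegral_withDensity_eq_lintegral_mul₀' hH.aemeasurable hgm]
  apply lintegral_congr
  intro x
  simpa [enorm_eq_nnnorm] using key_pt (h x) (hh0 x) (g x)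

lemma memLp_mul_h [IsFiniteMeasure μ] [IsFiniteMeasure μ']
    (hh0 : ∀ x, 0 ≤ h x) (hhm : Measurable h)
    (hμ' : μ' = μ.withDensity fun x => ENNReal.ofReal (h x ^ 2))
    (hac : μ ≪ μ') {g : α → ℂ} (hg : MemLp g 2 μ') :
    MemLp (fun x => (h x : ℂ) * g x) 2 μ := by
  refine ⟨((Complex.measurable_ofReal.comp hhm).aestronglyMeasurable).mul
    (hg.1.mono_ac hac), ?_⟩
  rw [eLpNorm_mul_h hh0 hhm hμ' hg.1]
  exact hg.2

lemma h_ne_zero (hhm : Measurable h)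
    (hμ' : μ' = μ.withDensity fun x => ENNReal.ofReal (h x ^ 2))
    (hac : μ ≪ μ') : ∀ᵐ x ∂μ, h x ≠ 0 := by
  have hZ : MeasurableSet {x | h x = 0} := hhm (measurableSet_singleton 0)
  have h0 : μ' {x | h x = 0} = 0 := by
    rw [hμ', withDensity_apply _ hZ]
    rw [show ∫⁻ x in {x | h x = 0}, ENNReal.ofReal (h x ^ 2) ∂μ
        = ∫⁻ x in {x | h x = 0}, 0 ∂μ from
      setLIntegral_congr_fun hZ (fun x hx => by
        simp only [Set.mem_setOf_eq] at hx
        simp [hx])]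
    simp
  have h1 := hac h0
  rw [ae_iff]
  convert h1 using 2
  simp

lemma memLp_inv_mul [IsFiniteMeasure μ] [IsFiniteMeasure μ']
    (hh0 : ∀ x, 0 ≤ h x) (hhm : Measurable h)
    (hμ' : μ' = μ.withDensity fun x => ENNReal.ofReal (h x ^ 2))
    (hac : μ ≪ μ') (hac' : μ' ≪ μ) {g : α → ℂ} (hg : MemLp g 2 μ) :
    MemLp (fun x => ((h x : ℂ))⁻¹ * g x) 2 μ' := by
  have hne : ∀ᵐ x ∂μ, h x ≠ 0 := h_ne_zero hhm hμ' hac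
  have hsm : AEStronglyMeasurable (fun x => ((h x : ℂ))⁻¹ * g x) μ' :=
    ((Complex.measurable_ofReal.comp hhm).inv.aestronglyMeasurable).mul (hg.1.mono_ac hac')
  refine ⟨hsm, ?_⟩
  have key : eLpNorm (fun x => (h x : ℂ) * (((h x : ℂ))⁻¹ * g x)) 2 μ
      = eLpNorm (fun x => ((h x : ℂ))⁻¹ * g x) 2 μ' :=
    eLpNorm_mul_h hh0 hhm hμ' hsm
  have congr1 : (fun x => (h x : ℂ) * (((h x : ℂ))⁻¹ * g x)) =ᵐ[μ] g := by
    filter_upwards [hne] with x hx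
    have : (h x : ℂ) ≠ 0 := by exact_mod_cast hx
    field_simp
  rw [eLpNorm_congr_ae congr1] at key
  rw [← key]
  exact hg.2

end W


section W2
variable {α : Type*} [MeasurableSpace α] {μ μ' : Measure α} {h : α → ℝ}

lemma exists_W [IsFiniteMeasure μ] [IsFiniteMeasure μ']
    (hh0 : ∀ x, 0 ≤ h x) (hhm : Measurable h)
    (hμ' : μ' = μ.withDensity fun x => ENNReal.ofReal (h x ^ 2))
    (hac : μ ≪ μ') (hac' : μ' ≪ μ) :
    ∃ W : Lp ℂ 2 μ' ≃ₗᵢ[ℂ] Lp ℂ 2 μ,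
      ∀ g : Lp ℂ 2 μ', ⇑(W g) =ᵐ[μ] fun x => (h x : ℂ) * g x := by
  have hne : ∀ᵐ x ∂μ, h x ≠ 0 := h_ne_zero hhm hμ' hac
  have hne' : ∀ᵐ x ∂μ', h x ≠ 0 := hac'.ae_le hne
  refine ⟨{ toFun := fun g => (memLp_mul_h hh0 hhm hμ' hac (Lp.memLp g)).toLp _
            invFun := fun u => (memLp_inv_mul hh0 hhm hμ' hac hac' (Lp.memLp u)).toLp _
            map_add' := ?_
            map_smul' := ?_
            left_inv := ?_
            right_inv := ?_
            norm_map' := ?_ },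
    fun g => MemLp.coeFn_toLp (memLp_mul_h hh0 hhm hμ' hac (Lp.memLp g))⟩
  · intro g₁ g₂
    apply Lp.ext
    filter_upwards [MemLp.coeFn_toLp (memLp_mul_h hh0 hhm hμ' hac (Lp.memLp (g₁ + g₂))),
      hac.ae_le (Lp.coeFn_add g₁ g₂),
      Lp.coeFn_add ((memLp_mul_h hh0 hhm hμ' hac (Lp.memLp g₁)).toLp _)
        ((memLp_mul_h hh0 hhm hμ' hac (Lp.memLp g₂)).toLp _),
      MemLp.coeFn_toLp (memLp_mul_h hh0 hhm hμ' hac (Lp.memLp g₁)),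
      MemLp.coeFn_toLp (memLp_mul_h hh0 hhm hμ' hac (Lp.memLp g₂))]
      with x e1 e2 e3 e4 e5
    rw [e1, e3, Pi.add_apply, e4, e5, e2, Pi.add_apply, mul_add]
  · intro c g
    simp only [RingHom.id_apply]
    apply Lp.ext
    filter_upwards [MemLp.coeFn_toLp (memLp_mul_h hh0 hhm hμ' hac (Lp.memLp (c • g))),
      hac.ae_le (Lp.coeFn_smul c g),
      Lp.coeFn_smul c ((memLp_mul_h hh0 hhm hμ' hac (Lp.memLp g)).toLp _),
      MemLp.coeFn_toLp (memLp_mul_h hh0 hhm hμ' hac (Lp.memLp g))]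
      with x e1 e2 e3 e4
    rw [e1, e3, Pi.smul_apply, e4, e2, Pi.smul_apply, smul_eq_mul, smul_eq_mul]
    ring
  · intro g
    apply Lp.ext
    filter_upwards [MemLp.coeFn_toLp (memLp_inv_mul hh0 hhm hμ' hac hac'
        (Lp.memLp ((memLp_mul_h hh0 hhm hμ' hac (Lp.memLp g)).toLp _))),
      hac'.ae_le (MemLp.coeFn_toLp (memLp_mul_h hh0 hhm hμ' hac (Lp.memLp g))), hne']
      with x e1 e2 e3
    rw [e1, e2]
    have : (h x : ℂ) ≠ 0 := by exact_mod_cast e3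
    field_simp
  · intro u
    apply Lp.ext
    filter_upwards [MemLp.coeFn_toLp (memLp_mul_h hh0 hhm hμ' hac
        (Lp.memLp ((memLp_inv_mul hh0 hhm hμ' hac hac' (Lp.memLp u)).toLp _))),
      hac.ae_le (MemLp.coeFn_toLp (memLp_inv_mul hh0 hhm hμ' hac hac' (Lp.memLp u))), hne]
      with x e1 e2 e3
    rw [e1, e2]
    have : (h x : ℂ) ≠ 0 := by exact_mod_cast e3
    field_simp
  · intro g
    show ‖MemLp.toLp _ (memLp_mul_h hh0 hhm hμ' hac (Lp.memLp g))‖ = ‖g‖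
    rw [Lp.norm_toLp, eLpNorm_mul_h hh0 hhm hμ' (Lp.memLp g).1, Lp.norm_def]

end W2


section Main
variable {N : ℕ}

lemma map_prepend_eq (μ : Measure (Word N)) [IsFiniteMeasure μ] (i : Fin N)
    (fi : Word N → ℝ) (hac : μ.map (prepend i) ≪ μ)
    (hrn : (μ.map (prepend i)).rnDeriv μ =ᵐ[μ] fun x => ENNReal.ofReal (fi x ^ 2)) :
    μ.map (prepend i) = μ.withDensity fun x => ENNReal.ofReal (fi x ^ 2) := by
  have hfin : IsFiniteMeasure (μ.map (prepend i)) := ⟨by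
    rw [Measure.map_apply (measurable_prepend i) MeasurableSet.univ]
    exact measure_lt_top μ _⟩
  haveI := Measure.haveLebesgueDecomposition_of_finiteMeasure (μ := μ.map (prepend i)) (ν := μ)
  conv_lhs => rw [← Measure.withDensity_rnDeriv_eq _ _ hac]
  exact withDensity_congr_ae hrn

lemma shift_null (μ : Measure (Word N)) [IsFiniteMeasure μ] (f : Fin N → Word N → ℝ)
    (hf2 : ∀ i, AEMeasurable (f i) μ)
    (hac : ∀ i, μ.map (prepend i) ≪ μ)
    (hrn : ∀ i, (μ.map (prepend i)).rnDeriv μ =ᵐ[μ] fun x => ENNReal.ofReal (f i x ^ 2))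
    (hne : ∀ i, ∀ᵐ x ∂μ, x 0 = i → f i x ≠ 0)
    {s : Set (Word N)} (hs : MeasurableSet s) (h0 : μ s = 0) :
    μ (shift ⁻¹' s) = 0 := by
  have cover : shift ⁻¹' s ⊆ ⋃ i : Fin N, (shift ⁻¹' s ∩ {x | x 0 = i}) := fun x hx =>
    Set.mem_iUnion.mpr ⟨x 0, hx, rfl⟩
  refine measure_mono_null cover (measure_iUnion_null fun i => ?_)
  have h0i : MeasurableSet {x : Word N | x 0 = i} := by
    have : {x : Word N | x 0 = i} = (fun x : Word N => x 0) ⁻¹' {i} := rfl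
    rw [this]
    exact measurable_pi_apply 0 (measurableSet_singleton i)
  have hBm : MeasurableSet (shift ⁻¹' s ∩ {x | x 0 = i}) :=
    (measurable_shift hs).inter h0i
  have hmap : μ.map (prepend i) (shift ⁻¹' s ∩ {x | x 0 = i}) = 0 := by
    rw [Measure.map_apply (measurable_prepend i) hBm]
    have hpre : prepend i ⁻¹' (shift ⁻¹' s ∩ {x | x 0 = i}) = s := by
      ext x
      simp [Set.mem_preimage, shift_prepend, prepend_zero]
    rw [hpre]
    exact h0
  rw [map_prepend_eq μ i (f i) (hac i) (hrn i), withDensity_apply _ hBm] at hmap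
  have hae : ∀ᵐ x ∂μ, x ∈ shift ⁻¹' s ∩ {x | x 0 = i} → ENNReal.ofReal (f i x ^ 2) = 0 :=
    (setLIntegral_eq_zero_iff' hBm (((hf2 i).pow_const 2).ennreal_ofReal.restrict)).mp hmap
  have : ∀ᵐ x ∂μ, x ∉ shift ⁻¹' s ∩ {x | x 0 = i} := by
    filter_upwards [hae, hne i] with x e1 e2
    intro hxB
    have hx0 : x 0 = i := hxB.2
    have hfz := e1 hxB
    rw [ENNReal.ofReal_eq_zero] at hfz
    have : f i x ^ 2 = 0 := le_antisymm hfz (sq_nonneg _)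
    exact e2 hx0 (pow_eq_zero_iff (by norm_num) |>.mp this)
  rw [ae_iff] at this
  simpa only [not_not, Set.setOf_mem_eq] using this

lemma part1 (μ μ' : Measure (Word N)) [IsFiniteMeasure μ] [IsFiniteMeasure μ']
    (i : Fin N) (fi fi' : Word N → ℝ) (hfi0 : ∀ x, 0 ≤ fi x) (hfi0' : ∀ x, 0 ≤ fi' x)
    (hfim : AEMeasurable fi μ) (hfim' : AEMeasurable fi' μ')
    (hac : μ.map (prepend i) ≪ μ) (hac' : μ'.map (prepend i) ≪ μ')
    (hrn : (μ.map (prepend i)).rnDeriv μ =ᵐ[μ] fun x => ENNReal.ofReal (fi x ^ 2))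
    (hrn' : (μ'.map (prepend i)).rnDeriv μ' =ᵐ[μ'] fun x => ENNReal.ofReal (fi' x ^ 2))
    (hacm : μ ≪ μ') (hacm' : μ' ≪ μ)
    (h : Word N → ℝ) (hh0 : ∀ x, 0 ≤ h x) (hhm : Measurable h)
    (hμ' : μ' = μ.withDensity fun x => ENNReal.ofReal (h x ^ 2)) :
    (fun x => fi' x * h x) =ᵐ[μ] fun x => fi x * h (shift x) := by
  set H : Word N → ℝ≥0∞ := fun x => ENNReal.ofReal (h x ^ 2) with hHdef
  set F : Word N → ℝ≥0∞ := fun x => ENNReal.ofReal (fi x ^ 2) with hFdef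
  set F' : Word N → ℝ≥0∞ := fun x => ENNReal.ofReal (fi' x ^ 2) with hF'def
  have hHm : Measurable H := (hhm.pow_const 2).ennreal_ofReal
  have hFm : AEMeasurable F μ := ((hfim.pow_const 2)).ennreal_ofReal
  have hF'm : AEMeasurable F' μ := (((hfim'.mono_ac hacm).pow_const 2)).ennreal_ofReal
  have e1 : μ'.map (prepend i) = μ.withDensity (H * F') := by
    rw [map_prepend_eq μ' i fi' hac' hrn', hμ',
      withDensity_mul₀ hHm.aemeasurable hF'm]
  have e2 : μ'.map (prepend i) = μ.withDensity (F * (H ∘ shift)) := by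
    have step : μ'.map (prepend i) = (μ.map (prepend i)).withDensity (H ∘ shift) := by
      ext A hA
      rw [Measure.map_apply (measurable_prepend i) hA, hμ',
        withDensity_apply _ ((measurable_prepend i) hA),
        withDensity_apply _ hA,
        setLIntegral_map hA (hHm.comp measurable_shift) (measurable_prepend i)]
      exact lintegral_congr fun x => rfl
    rw [step, map_prepend_eq μ i fi hac hrn,
      ← withDensity_mul₀ hFm (hHm.comp measurable_shift).aemeasurable]
  have hfin : ∫⁻ x, (H * F') x ∂μ ≠ ∞ := by
    have : ∫⁻ x, (H * F') x ∂μ = μ.withDensity (H * F') Set.univ := by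
      rw [withDensity_apply _ MeasurableSet.univ, setLIntegral_univ]
    rw [this, ← e1, Measure.map_apply (measurable_prepend i) MeasurableSet.univ]
    exact measure_ne_top μ' _
  have key : (H * F') =ᵐ[μ] (F * (H ∘ shift)) :=
    (withDensity_eq_iff (hHm.aemeasurable.mul hF'm)
      (hFm.mul (hHm.comp measurable_shift).aemeasurable) hfin).mp (e1.symm.trans e2)
  filter_upwards [key] with x hx
  simp only [Pi.mul_apply, Function.comp_apply, hHdef, hFdef, hF'def] at hx
  rw [← ENNReal.ofReal_mul (sq_nonneg _), ← ENNReal.ofReal_mul (sq_nonneg _)] at hx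
  have hre : h x ^ 2 * fi' x ^ 2 = fi x ^ 2 * h (shift x) ^ 2 :=
    (ENNReal.ofReal_eq_ofReal_iff (by positivity) (by positivity)).mp hx
  have hsq : (fi' x * h x) ^ 2 = (fi x * h (shift x)) ^ 2 := by
    rw [mul_pow, mul_pow]; linarith
  have := congrArg Real.sqrt hsq
  rwa [Real.sqrt_sq (mul_nonneg (hfi0' x) (hh0 x)),
    Real.sqrt_sq (mul_nonneg (hfi0 x) (hh0 (shift x)))] at this

end Main

end MonicAux

theorem nonneg_monicSystem_equivalent_of_equivalent_measures {N : ℕ} (hN : 2 ≤ N)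
    (μ μ' : Measure (Word N)) [IsFiniteMeasure μ] [IsFiniteMeasure μ']
    (f f' : Fin N → Word N → ℝ)
    (hf0 : ∀ i x, 0 ≤ f i x) (hf0' : ∀ i x, 0 ≤ f' i x)
    (hf2 : ∀ i, MemLp (f i) 2 μ) (hf2' : ∀ i, MemLp (f' i) 2 μ')
    (hac : ∀ i, μ.map (prepend i) ≪ μ) (hac' : ∀ i, μ'.map (prepend i) ≪ μ')
    (hrn : ∀ i, (μ.map (prepend i)).rnDeriv μ =ᵐ[μ]
      fun x => ENNReal.ofReal (f i x ^ 2))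
    (hrn' : ∀ i, (μ'.map (prepend i)).rnDeriv μ' =ᵐ[μ']
      fun x => ENNReal.ofReal (f' i x ^ 2))
    (hne : ∀ i, ∀ᵐ x ∂μ, x 0 = i → f i x ≠ 0)
    (hne' : ∀ i, ∀ᵐ x ∂μ', x 0 = i → f' i x ≠ 0)
    (heq : μ ≪ μ' ∧ μ' ≪ μ)
    (h : Word N → ℝ) (hh0 : ∀ x, 0 ≤ h x) (hhm : Measurable h)
    (hh : μ'.rnDeriv μ =ᵐ[μ] fun x => ENNReal.ofReal (h x ^ 2)) :
    (∀ i, (fun x => f' i x * h x) =ᵐ[μ] fun x => f i x * h (shift x)) ∧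
      (∀ (S : Fin N → (Lp ℂ 2 μ →L[ℂ] Lp ℂ 2 μ))
        (S' : Fin N → (Lp ℂ 2 μ' →L[ℂ] Lp ℂ 2 μ')),
        (∀ i (g : Lp ℂ 2 μ), ⇑(S i g) =ᵐ[μ] fun x => (f i x : ℂ) * g (shift x)) →
        (∀ i (g : Lp ℂ 2 μ'), ⇑(S' i g) =ᵐ[μ'] fun x => (f' i x : ℂ) * g (shift x)) →
        ∃ W : Lp ℂ 2 μ' ≃ₗᵢ[ℂ] Lp ℂ 2 μ, ∀ i g, S i (W g) = W (S' i g)) := by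
  obtain ⟨hac1, hac2⟩ := heq
  have hμ'eq : μ' = μ.withDensity fun x => ENNReal.ofReal (h x ^ 2) := by
    haveI := Measure.haveLebesgueDecomposition_of_finiteMeasure (μ := μ') (ν := μ)
    have e := Measure.withDensity_rnDeriv_eq μ' μ hac2
    rw [withDensity_congr_ae hh] at e
    exact e.symm
  have hpart1 : ∀ i, (fun x => f' i x * h x) =ᵐ[μ] fun x => f i x * h (shift x) := fun i =>
    MonicAux.part1 μ μ' i (f i) (f' i) (hf0 i) (hf0' i) ((hf2 i).1.aemeasurable)
      ((hf2' i).1.aemeasurable) (hac i) (hac' i) (hrn i) (hrn' i) hac1 hac2 h hh0 hhm hμ'eq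
  refine ⟨hpart1, ?_⟩
  intro S S' hS hS'
  obtain ⟨W, hW⟩ := MonicAux.exists_W hh0 hhm hμ'eq hac1 hac2
  refine ⟨W, fun i g => ?_⟩
  apply Lp.ext
  have h1 := hS i (W g)
  have h3 := hW (S' i g)
  have h4 : ⇑(S' i g) =ᵐ[μ] fun x => (f' i x : ℂ) * (g : Lp ℂ 2 μ') (shift x) :=
    (hS' i g).filter_mono hac1.ae_le
  have h2 : (fun x => (W g : Lp ℂ 2 μ) (shift x)) =ᵐ[μ]
      fun x => ((h (shift x) : ℂ)) * (g : Lp ℂ 2 μ') (shift x) := by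
    have hWg : μ {x | ¬ (W g : Lp ℂ 2 μ) x = (h x : ℂ) * (g : Lp ℂ 2 μ') x} = 0 :=
      ae_iff.mp (hW g)
    set D := {x | ¬ (W g : Lp ℂ 2 μ) x = (h x : ℂ) * (g : Lp ℂ 2 μ') x} with hD
    have hD0 : μ (toMeasurable μ D) = 0 := by rw [measure_toMeasurable]; exact hWg
    have hnull : μ (shift ⁻¹' toMeasurable μ D) = 0 :=
      MonicAux.shift_null μ f (fun j => (hf2 j).1.aemeasurable) hac hrn hne
        (measurableSet_toMeasurable μ D) hD0
    refine ae_iff.mpr (measure_mono_null ?_ hnull)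
    intro x hx
    exact subset_toMeasurable μ D hx
  have h5 : (fun x => (f' i x : ℂ) * (h x : ℂ)) =ᵐ[μ]
      fun x => (f i x : ℂ) * (h (shift x) : ℂ) := by
    filter_upwards [hpart1 i] with x hx
    have := congrArg (fun t : ℝ => (t : ℂ)) hx
    push_cast at this
    exact this
  filter_upwards [h1, h2, h3, h4, h5] with x e1 e2 e3 e4 e5
  rw [e1, e2, e3, e4]
  linear_combination (-(((g : Lp ℂ 2 μ') : Word N → ℂ) (shift x))) * e5
end
end
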